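/- Let a, b, r, δ, q^{x0} > 0, let z < x̄₀ be reals, and let q : [0,∞) → ℝ be continuous and nonnegative. Let u : [0,∞) → ℝ be a locally integrable control whose state x solves x'(t) = −a(x(t) − x̄₀) + b u(t) with x(0) = x̄₀, and suppose J(u) < ∞. If x(t₀) > x̄₀ for some t₀ > 0, then there exists a locally integrable control v, with state x̂ solving x̂'(t) = −a(x̂(t) − x̄₀) + b v(t), x̂(0) = x̄₀, such that J(v) < J(u). -/

import Mathlib

open MeasureTheory
open Set Filter
open scoped Classical

noncomputable def costFn (r δ qx0 z xbar0 : ℝ) (q u x : ℝ → ℝ) : ℝ → ℝ :=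
  fun t => Real.exp (-δ * t) *
    ((q t / 2) * (x t - z) ^ 2 + (qx0 / 2) * (x t - xbar0) ^ 2 +
      (r / 2) * (u t) ^ 2)

open Set Filter in
lemma aux_better (a b r δ qx0 z xbar0 : ℝ)
    (hr : 0 < r) (hqx0 : 0 < qx0) (hz : z < xbar0) (q u x : ℝ → ℝ)
    (hqc : ContinuousOn q (Set.Ici 0)) (hqnn : ∀ t ≥ (0 : ℝ), 0 ≤ q t)
    (hu : LocallyIntegrableOn u (Set.Ici 0))
    (hxc : ContinuousOn x (Set.Ici 0))
    (hJ : IntegrableOn (costFn r δ qx0 z xbar0 q u x) (Set.Ioi 0))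
    (E : Set ℝ) [∀ t : ℝ, Decidable (t ∈ E)] (hEmeas : MeasurableSet E) (hEsub : E ⊆ Set.Ioi 0)
    (hfr : ∀ t ∈ frontier E, x t = xbar0)
    (hxge : ∀ t ∈ E, xbar0 ≤ x t)
    (c d : ℝ) (hc0 : 0 ≤ c) (hcd : c < d)
    (hIoo : Set.Ioo c d ⊆ E) (hxIoo : ∀ t ∈ Set.Ioo c d, xbar0 < x t)
    (hkey : ∀ t ≥ (0:ℝ),
      (∫ s in (0:ℝ)..t, (Eᶜ.indicator (fun s => -a * (x s - xbar0) + b * u s) s))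
        = (if t ∈ E then xbar0 else x t) - xbar0) :
    ∃ v xv : ℝ → ℝ,
      LocallyIntegrableOn v (Set.Ici 0) ∧
      ContinuousOn xv (Set.Ici 0) ∧
      (∀ t ≥ (0 : ℝ),
        xv t = xbar0 + ∫ s in (0 : ℝ)..t, (-a * (xv s - xbar0) + b * v s)) ∧
      IntegrableOn (costFn r δ qx0 z xbar0 q v xv) (Set.Ioi 0) ∧
      (∫ t in Set.Ioi (0 : ℝ), costFn r δ qx0 z xbar0 q v xv t) <
        ∫ t in Set.Ioi (0 : ℝ), costFn r δ qx0 z xbar0 q u x t := by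
  set v : ℝ → ℝ := Eᶜ.indicator u with hv
  set xv : ℝ → ℝ := fun t => if t ∈ E then xbar0 else x t with hxv
  -- continuity of xv
  have hxvc : ContinuousOn xv (Set.Ici 0) := by
    apply ContinuousOn.if
    · intro t ht
      have : frontier {s | s ∈ E} = frontier E := rfl
      exact (hfr t (by simpa using ht.2)).symm
    · exact continuousOn_const
    · exact hxc.mono (Set.inter_subset_left)
  -- value of v, xv on E and off E
  have hvE : ∀ t ∈ E, v t = 0 := fun t ht => Set.indicator_of_notMem (by simpa using ht) u
  have hvE' : ∀ t ∉ E, v t = u t := fun t ht => Set.indicator_of_mem (by simpa using ht) u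
  have hxvE : ∀ t ∈ E, xv t = xbar0 := fun t ht => if_pos ht
  have hxvE' : ∀ t ∉ E, xv t = x t := fun t ht => if_neg ht
  -- pointwise comparison of costs
  have hfg : ∀ t ∈ Set.Ioi (0:ℝ),
      costFn r δ qx0 z xbar0 q v xv t ≤ costFn r δ qx0 z xbar0 q u x t := by
    intro t ht
    by_cases htE : t ∈ E
    · have hq : 0 ≤ q t := hqnn t (le_of_lt ht)
      have hx1 : xbar0 ≤ x t := hxge t htE
      have hsq : (xbar0 - z)^2 ≤ (x t - z)^2 := by nlinarith
      simp only [costFn, hvE t htE, hxvE t htE]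
      have he : 0 < Real.exp (-δ * t) := Real.exp_pos _
      apply mul_le_mul_of_nonneg_left _ he.le
      have h1 : q t / 2 * (xbar0 - z)^2 ≤ q t / 2 * (x t - z)^2 :=
        mul_le_mul_of_nonneg_left hsq (by positivity)
      nlinarith [sq_nonneg (x t - xbar0), sq_nonneg (u t)]
    · simp only [costFn, hvE' t htE, hxvE' t htE]
      exact le_rfl
  -- nonnegativity of costs
  have hnn : ∀ (w y : ℝ → ℝ), ∀ t ∈ Set.Ioi (0:ℝ), 0 ≤ costFn r δ qx0 z xbar0 q w y t := by
    intro w y t ht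
    have hq : 0 ≤ q t := hqnn t (le_of_lt ht)
    have he : 0 ≤ Real.exp (-δ * t) := (Real.exp_pos _).le
    apply mul_nonneg he
    have := sq_nonneg (y t - z); have := sq_nonneg (y t - xbar0); have := sq_nonneg (w t)
    positivity
  -- measurability
  have hmu : AEStronglyMeasurable u (volume.restrict (Set.Ioi 0)) :=
    (hu.aestronglyMeasurable).mono_measure
      (Measure.restrict_mono Set.Ioi_subset_Ici_self le_rfl)
  have hmv : AEStronglyMeasurable v (volume.restrict (Set.Ioi 0)) :=
    hmu.indicator hEmeas.compl
  have hmxv : AEStronglyMeasurable xv (volume.restrict (Set.Ioi 0)) :=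
    (hxvc.aestronglyMeasurable measurableSet_Ici).mono_measure
      (Measure.restrict_mono Set.Ioi_subset_Ici_self le_rfl)
  have hmq : AEStronglyMeasurable q (volume.restrict (Set.Ioi 0)) :=
    (hqc.aestronglyMeasurable measurableSet_Ici).mono_measure
      (Measure.restrict_mono Set.Ioi_subset_Ici_self le_rfl)
  have hmq2 : AEStronglyMeasurable (fun t => q t / 2) (volume.restrict (Set.Ioi 0)) := by
    simpa [div_eq_mul_inv, Pi.mul_def] using
      hmq.mul (aestronglyMeasurable_const : AEStronglyMeasurable (fun _ => (2:ℝ)⁻¹) _)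
  have hmf : AEStronglyMeasurable (costFn r δ qx0 z xbar0 q v xv)
      (volume.restrict (Set.Ioi 0)) := by
    apply AEStronglyMeasurable.mul
    · exact (Real.continuous_exp.comp (continuous_const.mul continuous_id)).aestronglyMeasurable
    · exact ((hmq2.mul ((hmxv.sub aestronglyMeasurable_const).pow 2)).add
        (aestronglyMeasurable_const.mul ((hmxv.sub aestronglyMeasurable_const).pow 2))).add
        (aestronglyMeasurable_const.mul (hmv.pow 2))
  -- integrability of the new cost
  have hint : IntegrableOn (costFn r δ qx0 z xbar0 q v xv) (Set.Ioi 0) := by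
    apply Integrable.mono' hJ hmf
    rw [ae_restrict_iff' measurableSet_Ioi]
    filter_upwards with t ht
    rw [Real.norm_eq_abs, abs_of_nonneg (hnn v xv t ht)]
    exact hfg t ht
  refine ⟨v, xv, ?_, hxvc, ?_, hint, ?_⟩
  · -- local integrability of v
    intro t ht
    obtain ⟨s, hs, hsint⟩ := hu t ht
    exact ⟨s, hs, hsint.indicator hEmeas.compl⟩
  · -- the state equation
    intro t ht
    have h1 : (fun s => -a * (xv s - xbar0) + b * v s)
        = Eᶜ.indicator (fun s => -a * (x s - xbar0) + b * u s) := by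
      funext s
      by_cases hsE : s ∈ E
      · simp [hxvE s hsE, hvE s hsE, Set.indicator_apply, hsE]
      · simp [hxvE' s hsE, hvE' s hsE, Set.indicator_apply, hsE]
    rw [h1, hkey t ht]
    by_cases htE : t ∈ E
    · simp [hxvE t htE, htE]
    · simp [hxvE' t htE, htE]
  · -- strict inequality
    have hD : IntegrableOn
        (fun t => costFn r δ qx0 z xbar0 q u x t - costFn r δ qx0 z xbar0 q v xv t)
        (Set.Ioi 0) := hJ.sub hint
    have hDnn : 0 ≤ᵐ[volume.restrict (Set.Ioi 0)]
        (fun t => costFn r δ qx0 z xbar0 q u x t - costFn r δ qx0 z xbar0 q v xv t) := by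
      filter_upwards [ae_restrict_mem measurableSet_Ioi] with t ht
      have := hfg t ht; simp only [Pi.zero_apply]; linarith
    have hpos : 0 < ∫ t in Set.Ioi (0:ℝ),
        (costFn r δ qx0 z xbar0 q u x t - costFn r δ qx0 z xbar0 q v xv t) := by
      have hsub : Set.Ioo c d ⊆ Set.Ioi (0:ℝ) := fun s hs => hEsub (hIoo hs)
      have hle : (∫ t in Set.Ioo c d,
          (costFn r δ qx0 z xbar0 q u x t - costFn r δ qx0 z xbar0 q v xv t))
          ≤ ∫ t in Set.Ioi (0:ℝ),
          (costFn r δ qx0 z xbar0 q u x t - costFn r δ qx0 z xbar0 q v xv t) :=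
        setIntegral_mono_set hD hDnn (HasSubset.Subset.eventuallyLE hsub)
      have hlt : 0 < ∫ t in Set.Ioo c d,
          (costFn r δ qx0 z xbar0 q u x t - costFn r δ qx0 z xbar0 q v xv t) := by
        rw [← MeasureTheory.integral_Ioc_eq_integral_Ioo,
          ← intervalIntegral.integral_of_le hcd.le]
        apply intervalIntegral.intervalIntegral_pos_of_pos_on
        · rw [intervalIntegrable_iff_integrableOn_Ioc_of_le hcd.le]
          exact hD.mono_set (fun s hs => hc0.trans_lt hs.1)
        · intro s hs
          have hsE := hIoo hs
          have hs0 : (0:ℝ) < s := hEsub hsE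
          have hq : 0 ≤ q s := hqnn s hs0.le
          have hx1 : xbar0 < x s := hxIoo s hs
          have hsq : (xbar0 - z)^2 ≤ (x s - z)^2 := by nlinarith
          have he : 0 < Real.exp (-δ * s) := Real.exp_pos _
          simp only [costFn, hvE s hsE, hxvE s hsE]
          have h1 : q s / 2 * (xbar0 - z)^2 ≤ q s / 2 * (x s - z)^2 :=
            mul_le_mul_of_nonneg_left hsq (by positivity)
          have h2 : 0 < (qx0 / 2) * (x s - xbar0)^2 :=
            mul_pos (by positivity) (pow_pos (by linarith) 2)
          have h3 : q s / 2 * (xbar0 - z)^2 + qx0/2 * (xbar0 - xbar0)^2 + r/2 * (0:ℝ)^2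
              < q s / 2 * (x s - z)^2 + qx0/2 * (x s - xbar0)^2 + r/2 * (u s)^2 := by
            nlinarith [sq_nonneg (u s)]
          have h4 := mul_lt_mul_of_pos_left h3 he
          linarith
        · exact hcd
      linarith
    have heq : ∫ t in Set.Ioi (0:ℝ),
        (costFn r δ qx0 z xbar0 q u x t - costFn r δ qx0 z xbar0 q v xv t)
        = (∫ t in Set.Ioi (0:ℝ), costFn r δ qx0 z xbar0 q u x t)
          - ∫ t in Set.Ioi (0:ℝ), costFn r δ qx0 z xbar0 q v xv t :=
      integral_sub hJ hint
    linarith [heq ▸ hpos]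

open scoped Classical in
/-- If the state of a finite-cost admissible control exceeds `x̄₀` at some
time `t₀ > 0`, then the control is not optimal: there is an admissible
control with strictly smaller cost. -/
theorem not_optimal_if_state_exceeds_upper_bound (a b r δ qx0 z xbar0 : ℝ)
    (ha : 0 < a) (hb : 0 < b) (hr : 0 < r) (hδ : 0 < δ) (hqx0 : 0 < qx0)
    (hz : z < xbar0) (q : ℝ → ℝ)
    (hqc : ContinuousOn q (Set.Ici 0)) (hqnn : ∀ t ≥ (0 : ℝ), 0 ≤ q t)
    (u x : ℝ → ℝ)
    (hu : LocallyIntegrableOn u (Set.Ici 0))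
    (hxc : ContinuousOn x (Set.Ici 0))
    (hx : ∀ t ≥ (0 : ℝ),
      x t = xbar0 + ∫ s in (0 : ℝ)..t, (-a * (x s - xbar0) + b * u s))
    (hJ : IntegrableOn (costFn r δ qx0 z xbar0 q u x) (Set.Ioi 0))
    (t0 : ℝ) (ht0 : 0 < t0) (hexc : xbar0 < x t0) :
    ∃ v xv : ℝ → ℝ,
      LocallyIntegrableOn v (Set.Ici 0) ∧
      ContinuousOn xv (Set.Ici 0) ∧
      (∀ t ≥ (0 : ℝ),
        xv t = xbar0 + ∫ s in (0 : ℝ)..t, (-a * (xv s - xbar0) + b * v s)) ∧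
      IntegrableOn (costFn r δ qx0 z xbar0 q v xv) (Set.Ioi 0) ∧
      (∫ t in Set.Ioi (0 : ℝ), costFn r δ qx0 z xbar0 q v xv t) <
        ∫ t in Set.Ioi (0 : ℝ), costFn r δ qx0 z xbar0 q u x t := by
  set G : ℝ → ℝ := fun s => -a * (x s - xbar0) + b * u s with hGdef
  have hx0 : x 0 = xbar0 := by
    have := hx 0 le_rfl; simpa [intervalIntegral.integral_same] using this
  have hxint : ∀ t, 0 ≤ t → (∫ s in (0:ℝ)..t, G s) = x t - xbar0 := by
    intro t ht; have := hx t ht; rw [hGdef]; linarith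
  have hGi : ∀ c d : ℝ, 0 ≤ c → c ≤ d → IntervalIntegrable G volume c d := by
    intro c d hc hcd
    apply IntervalIntegrable.add
    · apply ContinuousOn.intervalIntegrable
      apply continuousOn_const.mul ((hxc.mono ?_).sub continuousOn_const)
      rw [Set.uIcc_of_le hcd]
      exact fun s hs => le_trans hc hs.1
    · apply IntervalIntegrable.const_mul
      rw [intervalIntegrable_iff_integrableOn_Ioc_of_le hcd]
      exact (hu.integrableOn_compact_subset
        (fun s hs => le_trans hc hs.1 : Set.Icc c d ⊆ Set.Ici 0)
        isCompact_Icc).mono_set Set.Ioc_subset_Icc_self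
  have hFi : ∀ (E : Set ℝ), MeasurableSet E → ∀ c d : ℝ, 0 ≤ c → c ≤ d →
      IntervalIntegrable (Eᶜ.indicator G) volume c d := by
    intro E hE c d hc hcd
    have h1 := (intervalIntegrable_iff_integrableOn_Ioc_of_le hcd).1 (hGi c d hc hcd)
    rw [intervalIntegrable_iff_integrableOn_Ioc_of_le hcd]
    exact h1.indicator hE.compl
  -- the last time before t0 at which x equals xbar0
  set S : Set ℝ := {s | s ∈ Set.Icc 0 t0 ∧ x s = xbar0} with hSdef
  have hS0 : (0:ℝ) ∈ S := ⟨⟨le_rfl, ht0.le⟩, hx0⟩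
  have hSne : S.Nonempty := ⟨0, hS0⟩
  have hSbdd : BddAbove S := ⟨t0, fun s hs => hs.1.2⟩
  set τ := sSup S with hτdef
  have hSc : IsClosed S := by
    have hS2 : S = Set.Icc 0 t0 ∩ x ⁻¹' {xbar0} := by
      ext s
      exact Iff.rfl
    rw [hS2]
    exact (hxc.mono (fun s hs => hs.1)).preimage_isClosed_of_isClosed
      isClosed_Icc isClosed_singleton
  have hτS : τ ∈ S := hSc.csSup_mem hSne hSbdd
  have hτ0 : 0 ≤ τ := hτS.1.1
  have hτt0 : τ ≤ t0 := hτS.1.2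
  have hxτ : x τ = xbar0 := hτS.2
  have hτlt : τ < t0 :=
    lt_of_le_of_ne hτt0 (fun h => by rw [h] at hxτ; linarith)
  have hkey1 : ∀ s, τ < s → s ≤ t0 → xbar0 < x s := by
    intro s hs1 hs2
    by_contra hcon; push_neg at hcon
    have hs0 : (0:ℝ) ≤ s := le_trans hτ0 hs1.le
    have hsub : Set.Icc s t0 ⊆ Set.Ici 0 := fun p hp => le_trans hs0 hp.1
    have hmem : xbar0 ∈ Set.Icc (x s) (x t0) := ⟨hcon, hexc.le⟩
    obtain ⟨p, hp, hxp⟩ := intermediate_value_Icc hs2 (hxc.mono hsub) hmem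
    have hpS : p ∈ S := ⟨⟨le_trans hs0 hp.1, hp.2⟩, hxp⟩
    have := le_csSup hSbdd hpS
    linarith [hp.1]
  -- continuity at t0 and a small interval above xbar0
  have hca : ContinuousAt x t0 := by
    have h1 := hxc.continuousWithinAt (le_of_lt ht0 : (0:ℝ) ≤ t0)
    rwa [ContinuousWithinAt, nhdsWithin_eq_nhds.2 (Ici_mem_nhds ht0)] at h1
  have hev1 : ∀ᶠ s in nhds t0, xbar0 < x s := by
    filter_upwards [hca.eventually_mem (isOpen_Ioi.mem_nhds hexc)] with s hs
    exact hs
  by_cases hcase : ∃ s, t0 ≤ s ∧ x s ≤ xbar0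
  · -- Case A : x comes back to xbar0 after t0
    set T : Set ℝ := {s | t0 ≤ s ∧ x s ≤ xbar0} with hTdef
    have hTbdd : BddBelow T := ⟨t0, fun s hs => hs.1⟩
    set τ' := sInf T with hτ'def
    have hTc : IsClosed T := by
      have hT2 : T = Set.Ici t0 ∩ x ⁻¹' Set.Iic xbar0 := by
        ext s
        exact Iff.rfl
      rw [hT2]
      exact (hxc.mono (fun p hp => le_trans ht0.le hp)).preimage_isClosed_of_isClosed
        isClosed_Ici isClosed_Iic
    have hτ'T : τ' ∈ T := hTc.csInf_mem hcase hTbdd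
    have ht0τ' : t0 ≤ τ' := hτ'T.1
    have hxτ'le : x τ' ≤ xbar0 := hτ'T.2
    have ht0lt : t0 < τ' :=
      lt_of_le_of_ne ht0τ' (fun h => by rw [← h] at hxτ'le; linarith)
    have hττ' : τ < τ' := lt_trans hτlt ht0lt
    have hτ'0 : (0:ℝ) < τ' := lt_trans ht0 ht0lt
    have hkey2 : ∀ s, t0 ≤ s → s < τ' → xbar0 < x s := by
      intro s h1 h2
      by_contra hcon; push_neg at hcon
      exact absurd (csInf_le hTbdd ⟨h1, hcon⟩) (not_le.mpr h2)
    have hxτ' : x τ' = xbar0 := by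
      refine le_antisymm hxτ'le ?_
      have hcw : ContinuousWithinAt x (Set.Ico 0 τ') τ' :=
        (hxc.continuousWithinAt hτ'0.le).mono Set.Ico_subset_Ici_self
      have hne : (nhdsWithin τ' (Set.Ico 0 τ')).NeBot := by
        apply mem_closure_iff_nhdsWithin_neBot.1
        rw [closure_Ico (show (0:ℝ) ≠ τ' by linarith)]
        exact ⟨hτ'0.le, le_rfl⟩
      apply ge_of_tendsto hcw
      filter_upwards [(eventually_gt_nhds ht0lt).filter_mono nhdsWithin_le_nhds,
        self_mem_nhdsWithin] with s hs1 hs2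
      exact (hkey2 s hs1.le hs2.2).le
    set E : Set ℝ := Set.Ioo τ τ' with hEdef
    have hEmeas : MeasurableSet E := measurableSet_Ioo
    have hEsub : E ⊆ Set.Ioi 0 := fun s hs => lt_of_le_of_lt hτ0 hs.1
    have hfr : ∀ t ∈ frontier E, x t = xbar0 := by
      intro t ht
      rw [hEdef, frontier_Ioo hττ'] at ht
      rcases ht with h | h
      · rw [h]; exact hxτ
      · rw [Set.mem_singleton_iff.1 h]; exact hxτ'
    have hxge : ∀ t ∈ E, xbar0 ≤ x t := by
      intro t ht
      rcases le_or_gt t t0 with h | h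
      · exact (hkey1 t ht.1 h).le
      · exact (hkey2 t h.le ht.2).le
    have ht0E : t0 ∈ E := ⟨hτlt, ht0lt⟩
    -- small interval around t0
    obtain ⟨ε, hε, hball⟩ := Metric.eventually_nhds_iff.1
      (hev1.and ((isOpen_Ioo.eventually_mem ht0E)))
    set e : ℝ := min (ε/2) (t0/2) with hedef
    have he : 0 < e := lt_min (by linarith) (by linarith)
    have hsmall : ∀ y ∈ Set.Ioo (t0 - e) (t0 + e), xbar0 < x y ∧ y ∈ E := by
      intro y hy
      apply hball
      rw [Real.dist_eq, abs_lt]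
      constructor
      · have := min_le_left (ε/2) (t0/2); cases hy; linarith
      · have := min_le_left (ε/2) (t0/2); cases hy; linarith
    have hc0 : (0:ℝ) ≤ t0 - e := by
      have := min_le_right (ε/2) (t0/2); linarith
    have hcd : t0 - e < t0 + e := by linarith
    -- the key integral identity
    have hF1 : ∀ t, 0 ≤ t → t ≤ τ → (∫ s in (0:ℝ)..t, Eᶜ.indicator G s) = x t - xbar0 := by
      intro t h0 hτle
      rw [intervalIntegral.integral_congr (g := G) ?_]
      · exact hxint t h0
      · intro s hs
        rw [Set.uIcc_of_le h0] at hs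
        have hsE : s ∉ E := fun hE => absurd hE.1 (not_lt.mpr (le_trans hs.2 hτle))
        exact Set.indicator_of_mem (Set.mem_compl hsE) G
    have hF2 : ∀ t, τ < t → t ≤ τ' → (∫ s in (0:ℝ)..t, Eᶜ.indicator G s) = 0 := by
      intro t h1 h2
      have h0t : (0:ℝ) ≤ t := le_trans hτ0 h1.le
      rw [← intervalIntegral.integral_add_adjacent_intervals
        (hFi E hEmeas 0 τ le_rfl hτ0) (hFi E hEmeas τ t hτ0 h1.le)]
      rw [hF1 τ hτ0 le_rfl, hxτ]
      have hz2 : (∫ s in τ..t, Eᶜ.indicator G s) = 0 := by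
        rw [intervalIntegral.integral_of_le h1.le,
          MeasureTheory.integral_Ioc_eq_integral_Ioo,
          MeasureTheory.setIntegral_congr_fun (g := fun _ => (0:ℝ)) measurableSet_Ioo ?_]
        · simp
        · intro s hs
          have hsE : s ∈ E := ⟨hs.1, lt_of_lt_of_le hs.2 h2⟩
          exact Set.indicator_of_notMem (by simp [hsE]) G
      rw [hz2]; ring
    have hkey : ∀ t ≥ (0:ℝ),
        (∫ s in (0:ℝ)..t, Eᶜ.indicator G s) = (if t ∈ E then xbar0 else x t) - xbar0 := by
      intro t h0
      rcases le_or_gt t τ with h | h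
      · rw [hF1 t h0 h, if_neg (fun hE => absurd hE.1 (not_lt.mpr h))]
      rcases le_or_gt t τ' with h2 | h2
      · rw [hF2 t h h2]
        by_cases htE : t ∈ E
        · rw [if_pos htE]; ring
        · have ht : t = τ' := by
            rcases lt_or_eq_of_le h2 with h3 | h3
            · exact absurd ⟨h, h3⟩ htE
            · exact h3
          rw [if_neg htE, ht, hxτ']; ring
      · rw [← intervalIntegral.integral_add_adjacent_intervals
          (hFi E hEmeas 0 τ' le_rfl hτ'0.le) (hFi E hEmeas τ' t hτ'0.le h2.le)]
        rw [hF2 τ' hττ' le_rfl]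
        have hFG : (∫ s in τ'..t, Eᶜ.indicator G s) = ∫ s in τ'..t, G s := by
          apply intervalIntegral.integral_congr
          intro s hs
          rw [Set.uIcc_of_le h2.le] at hs
          exact Set.indicator_of_mem
            (Set.mem_compl (fun hE => absurd hE.2 (not_lt.mpr hs.1))) G
        have hGsplit : (∫ s in τ'..t, G s) = (x t - xbar0) - (x τ' - xbar0) := by
          have hadd := intervalIntegral.integral_add_adjacent_intervals
            (hGi 0 τ' le_rfl hτ'0.le) (hGi τ' t hτ'0.le h2.le)
          have e1 := hxint τ' hτ'0.le
          have e2 := hxint t h0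
          linarith
        rw [hFG, hGsplit, hxτ', if_neg (fun hE => absurd hE.2 (not_lt.mpr h2.le))]
        ring
    exact aux_better a b r δ qx0 z xbar0 hr hqx0 hz q u x hqc hqnn hu hxc hJ
      E hEmeas hEsub hfr hxge (t0 - e) (t0 + e) hc0 hcd
      (fun y hy => (hsmall y hy).2) (fun y hy => (hsmall y hy).1) hkey
  · -- Case B : x stays above xbar0 after t0
    push_neg at hcase
    set E : Set ℝ := Set.Ioi τ with hEdef
    have hEmeas : MeasurableSet E := measurableSet_Ioi
    have hEsub : E ⊆ Set.Ioi 0 := fun s hs => lt_of_le_of_lt hτ0 hs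
    have hfr : ∀ t ∈ frontier E, x t = xbar0 := by
      intro t ht
      rw [hEdef, frontier_Ioi] at ht
      rw [Set.mem_singleton_iff.1 ht]; exact hxτ
    have hxge : ∀ t ∈ E, xbar0 ≤ x t := by
      intro t ht
      rcases le_or_gt t t0 with h | h
      · exact (hkey1 t ht h).le
      · exact (hcase t h.le).le
    have ht0E : t0 ∈ E := hτlt
    obtain ⟨ε, hε, hball⟩ := Metric.eventually_nhds_iff.1
      (hev1.and ((isOpen_Ioi.eventually_mem ht0E)))
    set e : ℝ := min (ε/2) (t0/2) with hedef
    have he : 0 < e := lt_min (by linarith) (by linarith)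
    have hsmall : ∀ y ∈ Set.Ioo (t0 - e) (t0 + e), xbar0 < x y ∧ y ∈ E := by
      intro y hy
      apply hball
      rw [Real.dist_eq, abs_lt]
      constructor
      · have := min_le_left (ε/2) (t0/2); cases hy; linarith
      · have := min_le_left (ε/2) (t0/2); cases hy; linarith
    have hc0 : (0:ℝ) ≤ t0 - e := by
      have := min_le_right (ε/2) (t0/2); linarith
    have hcd : t0 - e < t0 + e := by linarith
    have hF1 : ∀ t, 0 ≤ t → t ≤ τ → (∫ s in (0:ℝ)..t, Eᶜ.indicator G s) = x t - xbar0 := by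
      intro t h0 hτle
      rw [intervalIntegral.integral_congr (g := G) ?_]
      · exact hxint t h0
      · intro s hs
        rw [Set.uIcc_of_le h0] at hs
        have hsE : s ∉ E := not_lt.mpr (le_trans hs.2 hτle)
        exact Set.indicator_of_mem (Set.mem_compl hsE) G
    have hkey : ∀ t ≥ (0:ℝ),
        (∫ s in (0:ℝ)..t, Eᶜ.indicator G s) = (if t ∈ E then xbar0 else x t) - xbar0 := by
      intro t h0
      rcases le_or_gt t τ with h | h
      · rw [hF1 t h0 h, if_neg (show t ∉ E from not_lt.mpr h)]
      · rw [← intervalIntegral.integral_add_adjacent_intervals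
          (hFi E hEmeas 0 τ le_rfl hτ0) (hFi E hEmeas τ t hτ0 h.le)]
        rw [hF1 τ hτ0 le_rfl, hxτ]
        have hz2 : (∫ s in τ..t, Eᶜ.indicator G s) = 0 := by
          rw [intervalIntegral.integral_of_le h.le,
            MeasureTheory.integral_Ioc_eq_integral_Ioo,
            MeasureTheory.setIntegral_congr_fun (g := fun _ => (0:ℝ)) measurableSet_Ioo ?_]
          · simp
          · intro s hs
            have hsE : s ∈ E := hs.1
            exact Set.indicator_of_notMem (by simp [hsE]) G
        rw [hz2, if_pos (Set.mem_Ioi.mpr h)]; ring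
    exact aux_better a b r δ qx0 z xbar0 hr hqx0 hz q u x hqc hqnn hu hxc hJ
      E hEmeas hEsub hfr hxge (t0 - e) (t0 + e) hc0 hcd
      (fun y hy => (hsmall y hy).2) (fun y hy => (hsmall y hy).1) hkey
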